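/- Let A be a centrohermitian matrix in M(m, m+n) over ℂ and let P_I(z_0,…,z_n) = det A_I(z_0,…,z_n), where A_I is the m×m submatrix of A(z_0,…,z_n) = A + z_0·I_0 + … + z_n·I_n formed by the columns indexed by I = {i_1 < … < i_m} ⊆ {1,…,m+n}. Then P_{Ī}(z_0,…,z_n) = conj(P_I(conj(z_n),…,conj(z_0))), where Ī = {m+n+1−i : i ∈ I}. -/
import Mathlib

/-- The `n × n` exchange matrix: ones on the anti-diagonal, zeros elsewhere. -/
noncomputable def Jex (n : ℕ) : Matrix (Fin n) (Fin n) ℂ :=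
  Matrix.of fun i j => if j = i.rev then 1 else 0

/-- The shifted unit matrix `I_s = (δ_{s+i-j}) ∈ M(m, m+n)`. -/
noncomputable def shiftI (m n : ℕ) (s : ℕ) : Matrix (Fin m) (Fin (m + n)) ℂ :=
  Matrix.of fun i j => if (j : ℕ) = (i : ℕ) + s then 1 else 0

/-- `A(z_0, …, z_n) = A + z_0·I_0 + ⋯ + z_n·I_n`. -/
noncomputable def Amat {m n : ℕ} (A : Matrix (Fin m) (Fin (m + n)) ℂ)
    (z : Fin (n + 1) → ℂ) : Matrix (Fin m) (Fin (m + n)) ℂ :=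
  A + ∑ s : Fin (n + 1), z s • shiftI m n (s : ℕ)

/-- The generalized characteristic polynomial `P_I(z_0,…,z_n)`: the determinant of the
`m × m` submatrix of `A(z_0,…,z_n)` formed by the columns selected by the strictly
increasing map `cols : Fin m → Fin (m+n)`. -/
noncomputable def Pgc {m n : ℕ} (A : Matrix (Fin m) (Fin (m + n)) ℂ)
    (cols : Fin m → Fin (m + n)) (z : Fin (n + 1) → ℂ) : ℂ :=
  ((Amat A z).submatrix id cols).det

/-- For a centrohermitian `A ∈ M(m, m+n)`,
`P_{Ī}(z_0,…,z_n) = conj (P_I(conj z_n, …, conj z_0))`, where `Ī = {m+n+1−i : i ∈ I}`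
(given in 0-indexed form by `i ↦ (cols i.rev).rev`). -/
theorem stmt5 (m n : ℕ) (A : Matrix (Fin m) (Fin (m + n)) ℂ)
    (hA : A = Jex m * A.map (starRingEnd ℂ) * Jex (m + n))
    (cols : Fin m → Fin (m + n)) (hcols : StrictMono cols)
    (z : Fin (n + 1) → ℂ) :
    Pgc A (fun i => (cols i.rev).rev) z =
      (starRingEnd ℂ) (Pgc A cols (fun s => (starRingEnd ℂ) (z s.rev))) := by
  set c := starRingEnd ℂ with hc
  set z' : Fin (n+1) → ℂ := fun s => c (z s.rev) with hz'
  have hA' : ∀ i j, A i j = c (A i.rev j.rev) := by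
    intro i j
    conv_lhs => rw [hA]
    have : ∀ x : Fin (m+n), (j = x.rev) = (x = j.rev) := by
      intro x; apply propext; constructor <;> rintro rfl <;> simp [Fin.rev_rev]
    simp [Jex, Matrix.mul_apply, Matrix.map_apply, ite_mul, mul_ite, this,
      Finset.sum_ite_eq', Finset.sum_ite_eq]
  have hshift : ∀ (s : Fin (n+1)) (i : Fin m) (j : Fin (m+n)),
      shiftI m n ((s.rev : Fin (n+1)) : ℕ) i.rev j.rev = shiftI m n (s : ℕ) i j := by
    intro s i j
    simp only [shiftI, Matrix.of_apply, Fin.val_rev]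
    have hi := i.isLt; have hj := j.isLt; have hs := s.isLt
    by_cases h : (j : ℕ) = i + s
    · rw [if_pos h, if_pos (by omega)]
    · rw [if_neg h, if_neg (by omega)]
  have key : ∀ (i : Fin m) (j : Fin (m+n)),
      Amat A z i j = c (Amat A z' i.rev j.rev) := by
    intro i j
    simp only [Amat, Matrix.add_apply, Matrix.sum_apply, Matrix.smul_apply, map_add, map_sum,
      map_mul, smul_eq_mul]
    rw [← hA']
    congr 1
    rw [← (Equiv.sum_comp (Fin.revPerm : Equiv.Perm (Fin (n+1))) _)]
    refine Finset.sum_congr rfl fun s _ => ?_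
    have hreal : ∀ (t : ℕ) (a : Fin m) (b : Fin (m+n)),
        c (shiftI m n t a b) = shiftI m n t a b := by
      intro t a b; simp only [shiftI, Matrix.of_apply]; split <;> simp
    simp only [hz', Fin.revPerm_apply, Fin.rev_rev, map_mul, RingHomCompTriple.comp_apply,
      hreal, RingHom.id_apply, Complex.conj_conj]
    rw [← hshift s.rev i j, Fin.rev_rev]
  have hM : ((Amat A z).submatrix id (fun i => (cols i.rev).rev)) =
      ((((Amat A z').submatrix id cols).map c).submatrix
        (Fin.revPerm : Equiv.Perm (Fin m)) (Fin.revPerm : Equiv.Perm (Fin m))) := by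
    ext i j
    simp only [Matrix.submatrix_apply, Matrix.map_apply, id_eq, Fin.revPerm_apply]
    rw [key]
    simp [Fin.rev_rev]
  show ((Amat A z).submatrix id (fun i => (cols i.rev).rev)).det = _
  rw [hM, Matrix.det_submatrix_equiv_self]
  rw [Pgc, (c : ℂ →+* ℂ).map_det]
  rfl
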